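/- Generalized Itô–Kunita / chain rule for vertically differentiable deterministic path functionals: if u : [0,T] × Λ → ℝ satisfies the horizontal-extension identity u(τ, x_{ρ,τ−ρ}) = u(ρ, x_ρ) + ∫_ρ^τ 𝔡_s u(s, x_{ρ,s−ρ}) ds for all ρ ≤ τ and has a vertical gradient ∇u that is continuous and bounded, then along any solution X of dX/dt = β(t,X_t) with X = x_ρ on [0,ρ] one has u(τ, X_τ) − u(ρ, x_ρ) = ∫_ρ^τ [ 𝔡_s u(s, X_s) + β(s,X_s)·∇u(s,X_s) ] ds. -/

import Mathlib

open Set MeasureTheory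

noncomputable section

/-- Horizontal freezing of a path at time `t`: `(frz x t)(s) = x(s ∧ t)`; this encodes the
horizontal extension `x_{t,δ}` of a path and the restriction `x_t` as total functions. -/
def frz {d : ℕ} (x : ℝ → EuclideanSpace ℝ (Fin d)) (t : ℝ) : ℝ → EuclideanSpace ℝ (Fin d) :=
  fun s => x (min s t)

lemma frz_dist {d : ℕ} {L ρ T : ℝ} (hL : 0 ≤ L) (X : ℝ → EuclideanSpace ℝ (Fin d))
    (hXlip : ∀ a b, ρ ≤ a → a ≤ b → b ≤ T → ‖X b - X a‖ ≤ L * (b - a)) :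
    ∀ a ∈ Set.Icc ρ T, ∀ b ∈ Set.Icc ρ T, ∀ s, ‖frz X a s - frz X b s‖ ≤ L * |a - b| := by
  have key : ∀ a ∈ Set.Icc ρ T, ∀ b ∈ Set.Icc ρ T, a ≤ b → ∀ s,
      ‖frz X a s - frz X b s‖ ≤ L * |a - b| := by
    intro a ha b hb hab s
    rcases le_or_gt s a with hs | hs
    · have : min s a = min s b := by
        rw [min_eq_left hs, min_eq_left (hs.trans hab)]
      simp [frz, this]
      positivity
    · have h1 : min s a = a := min_eq_right hs.le
      have h2 : a ≤ min s b := le_min hs.le hab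
      have h3 : min s b ≤ b := min_le_right _ _
      have := hXlip a (min s b) ha.1 h2 (h3.trans hb.2)
      rw [frz, frz, h1, norm_sub_rev]
      calc ‖X (min s b) - X a‖ ≤ L * (min s b - a) := this
        _ ≤ L * |a - b| := by
            rw [abs_sub_comm, abs_of_nonneg (sub_nonneg.2 hab)]
            exact mul_le_mul_of_nonneg_left (by linarith) hL
  intro a ha b hb s
  rcases le_total a b with hab | hab
  · exact key a ha b hb hab s
  · rw [norm_sub_rev, abs_sub_comm]; exact key b hb a ha hab s

/-- joint ε-η continuity composed with a Lipschitz path family gives ContinuousOn. -/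
lemma aux_contOn {d : ℕ} {F : Type*} [NormedAddCommGroup F]
    {T : ℝ} (f : ℝ → (ℝ → EuclideanSpace ℝ (Fin d)) → F)
    (hcont : ∀ t ∈ Set.Icc (0:ℝ) T, ∀ x, ∀ ε > (0:ℝ), ∃ η > (0:ℝ),
      ∀ t' ∈ Set.Icc (0:ℝ) T, ∀ y, |t' - t| ≤ η → (∀ s, ‖y s - x s‖ ≤ η) →
        ‖f t' y - f t x‖ ≤ ε)
    (γ : ℝ → (ℝ → EuclideanSpace ℝ (Fin d))) (I : Set ℝ) (hI : I ⊆ Set.Icc 0 T)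
    (M : ℝ) (hM : 0 ≤ M)
    (hγ : ∀ a ∈ I, ∀ b ∈ I, ∀ s, ‖γ a s - γ b s‖ ≤ M * |a - b|) :
    ContinuousOn (fun t => f t (γ t)) I := by
  intro t₀ ht₀
  rw [Metric.continuousWithinAt_iff]
  intro ε hε
  obtain ⟨η, hη, H⟩ := hcont t₀ (hI ht₀) (γ t₀) (ε/2) (by positivity)
  refine ⟨η / (M + 1), by positivity, ?_⟩
  intro t ht hdist
  rw [Real.dist_eq] at hdist
  have hc : η / (M + 1) * (M + 1) = η := div_mul_cancel₀ η (by positivity)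
  have h1 : |t - t₀| ≤ η := by nlinarith [abs_nonneg (t - t₀)]
  have h2 : ∀ s, ‖γ t s - γ t₀ s‖ ≤ η := by
    intro s
    calc ‖γ t s - γ t₀ s‖ ≤ M * |t - t₀| := hγ t ht t₀ ht₀ s
      _ ≤ η := by nlinarith [abs_nonneg (t - t₀)]
  have := H t (hI ht) (γ t) h1 h2
  rw [dist_eq_norm]
  linarith

/-- Uniform continuity along the compact family of frozen paths. -/
lemma aux_unif {d : ℕ} {F : Type*} [NormedAddCommGroup F]
    {T L ρ τ : ℝ} (hL : 0 ≤ L) (h0ρ : 0 ≤ ρ) (hρτ : ρ ≤ τ) (hτT : τ ≤ T)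
    (X : ℝ → EuclideanSpace ℝ (Fin d))
    (hXlip : ∀ a b, ρ ≤ a → a ≤ b → b ≤ T → ‖X b - X a‖ ≤ L * (b - a))
    (f : ℝ → (ℝ → EuclideanSpace ℝ (Fin d)) → F)
    (hcont : ∀ t ∈ Set.Icc (0:ℝ) T, ∀ x, ∀ ε > (0:ℝ), ∃ η > (0:ℝ),
      ∀ t' ∈ Set.Icc (0:ℝ) T, ∀ y, |t' - t| ≤ η → (∀ s, ‖y s - x s‖ ≤ η) →
        ‖f t' y - f t x‖ ≤ ε) :
    ∀ ε > (0:ℝ), ∃ η > (0:ℝ), ∀ t ∈ Set.Icc ρ τ, ∀ t' ∈ Set.Icc (0:ℝ) T, ∀ y,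
      |t' - t| ≤ η → (∀ s, ‖y s - frz X t s‖ ≤ η) →
      ‖f t' y - f t (frz X t)‖ ≤ ε := by
  intro ε hε
  have hsub : Set.Icc ρ τ ⊆ Set.Icc (0:ℝ) T := Set.Icc_subset_Icc h0ρ hτT
  have hfd := frz_dist hL X hXlip
  -- choose pointwise moduli
  have H : ∀ t : Set.Icc ρ τ, ∃ η > (0:ℝ),
      ∀ t' ∈ Set.Icc (0:ℝ) T, ∀ y, |t' - (t:ℝ)| ≤ η → (∀ s, ‖y s - frz X t s‖ ≤ η) →
        ‖f t' y - f t (frz X (t:ℝ))‖ ≤ ε/2 := by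
    intro t
    exact hcont t (hsub t.2) (frz X t) (ε/2) (by positivity)
  choose η hη0 hη using H
  set δ : Set.Icc ρ τ → ℝ := fun t => η t / (2 * (L + 1)) with hδdef
  have hδ0 : ∀ t, 0 < δ t := fun t => by have := hη0 t; positivity
  have hcover : Set.Icc ρ τ ⊆ ⋃ t : Set.Icc ρ τ, Set.Ioo ((t:ℝ) - δ t) ((t:ℝ) + δ t) := by
    intro x hx
    exact Set.mem_iUnion.2 ⟨⟨x, hx⟩, by simp [(hδ0 ⟨x, hx⟩)]⟩
  obtain ⟨I, hI⟩ := isCompact_Icc.elim_finite_subcover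
    (fun t : Set.Icc ρ τ => Set.Ioo ((t:ℝ) - δ t) ((t:ℝ) + δ t))
    (fun t => isOpen_Ioo) hcover
  have hIne : I.Nonempty := by
    by_contra hemp
    rw [Finset.not_nonempty_iff_eq_empty] at hemp
    have := hI (Set.left_mem_Icc.2 hρτ)
    simp [hemp] at this
  refine ⟨I.inf' hIne δ, ?_, ?_⟩
  · exact (Finset.lt_inf'_iff _).2 fun t _ => hδ0 t
  intro t ht t' ht' y hty hypath
  have hmem := hI ht
  simp only [Set.mem_iUnion] at hmem
  obtain ⟨i, hiI, hti⟩ := hmem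
  set ηm := I.inf' hIne δ with hηm
  have hηmδ : ηm ≤ δ i := Finset.inf'_le _ hiI
  have hti1 : |t - (i:ℝ)| ≤ δ i := by
    rw [abs_le]; constructor <;> [linarith [hti.1]; linarith [hti.2]]
  have hi0T : (i:ℝ) ∈ Set.Icc (0:ℝ) T := hsub i.2
  have hδη : 2 * (L+1) * δ i = η i := by
    simp only [hδdef]; field_simp [(by linarith : (0:ℝ) < 2*(L+1)).ne']
  -- distance from frz X t to frz X i
  have hfrz : ∀ s, ‖frz X t s - frz X (i:ℝ) s‖ ≤ L * δ i := by
    intro s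
    calc ‖frz X t s - frz X (i:ℝ) s‖ ≤ L * |t - (i:ℝ)| :=
          hfd t (Set.Icc_subset_Icc_right hτT ht) i (Set.Icc_subset_Icc_right hτT i.2) s
      _ ≤ L * δ i := mul_le_mul_of_nonneg_left hti1 hL
  have key1 : ‖f t' y - f (i:ℝ) (frz X (i:ℝ))‖ ≤ ε/2 := by
    apply hη i t' ht' y
    · have h1 : |t' - t| ≤ ηm := hty
      calc |t' - (i:ℝ)| ≤ |t' - t| + |t - (i:ℝ)| := abs_sub_le _ _ _
        _ ≤ δ i + δ i := add_le_add (h1.trans hηmδ) hti1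
        _ ≤ η i := by nlinarith [hδ0 i]
    · intro s
      calc ‖y s - frz X (i:ℝ) s‖ ≤ ‖y s - frz X t s‖ + ‖frz X t s - frz X (i:ℝ) s‖ := by
            simpa using norm_sub_le_norm_sub_add_norm_sub (y s) (frz X t s) (frz X (i:ℝ) s)
        _ ≤ ηm + L * δ i := add_le_add (hypath s) (hfrz s)
        _ ≤ η i := by nlinarith [hδ0 i]
  have key2 : ‖f t (frz X t) - f (i:ℝ) (frz X (i:ℝ))‖ ≤ ε/2 := by
    apply hη i t (hsub ht) (frz X t)
    · calc |t - (i:ℝ)| ≤ δ i := hti1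
        _ ≤ η i := by nlinarith [hδ0 i]
    · intro s
      calc ‖frz X t s - frz X (i:ℝ) s‖ ≤ L * δ i := hfrz s
        _ ≤ η i := by nlinarith [hδ0 i]
  calc ‖f t' y - f t (frz X t)‖
      ≤ ‖f t' y - f (i:ℝ) (frz X (i:ℝ))‖ + ‖f t (frz X t) - f (i:ℝ) (frz X (i:ℝ))‖ := by
        simpa [norm_sub_rev (f t (frz X t))] using
          norm_sub_le_norm_sub_add_norm_sub (f t' y) (f (i:ℝ) (frz X (i:ℝ))) (f t (frz X t))
    _ ≤ ε/2 + ε/2 := add_le_add key1 key2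
    _ = ε := by ring

/-- fixed-time continuity along a Lipschitz family of paths. -/
lemma aux_cont_fixed {d : ℕ} {F : Type*} [NormedAddCommGroup F]
    {T : ℝ} (f : ℝ → (ℝ → EuclideanSpace ℝ (Fin d)) → F)
    (hcont : ∀ t ∈ Set.Icc (0:ℝ) T, ∀ x, ∀ ε > (0:ℝ), ∃ η > (0:ℝ),
      ∀ t' ∈ Set.Icc (0:ℝ) T, ∀ y, |t' - t| ≤ η → (∀ s, ‖y s - x s‖ ≤ η) →
        ‖f t' y - f t x‖ ≤ ε)
    (t : ℝ) (ht : t ∈ Set.Icc (0:ℝ) T)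
    (γ : ℝ → (ℝ → EuclideanSpace ℝ (Fin d))) (M : ℝ) (hM : 0 ≤ M)
    (hγ : ∀ a b s, ‖γ a s - γ b s‖ ≤ M * |a - b|) :
    Continuous fun θ => f t (γ θ) := by
  rw [Metric.continuous_iff]
  intro θ₀ ε hε
  obtain ⟨η, hη, H⟩ := hcont t ht (γ θ₀) (ε/2) (by positivity)
  refine ⟨η / (M + 1), by positivity, ?_⟩
  intro θ hdist
  rw [Real.dist_eq] at hdist
  have hc : η / (M + 1) * (M + 1) = η := div_mul_cancel₀ η (by positivity)
  have h2 : ∀ s, ‖γ θ s - γ θ₀ s‖ ≤ η := by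
    intro s
    calc ‖γ θ s - γ θ₀ s‖ ≤ M * |θ - θ₀| := hγ θ θ₀ s
      _ ≤ η := by nlinarith [abs_nonneg (θ - θ₀)]
  have := H t ht (γ θ) (by simp [hη.le]) h2
  rw [dist_eq_norm]
  linarith
set_option maxHeartbeats 2000000 in
/-- generalized Itô–Kunita / chain rule for vertically differentiable
deterministic path functionals.  If `u` satisfies the horizontal-extension identity
`u(τ, x_{ρ,τ−ρ}) = u(ρ, x_ρ) + ∫_ρ^τ 𝔡_s u(s, x_{ρ,s−ρ}) ds` and has a (bounded,
continuous) vertical gradient `∇u = Du` (the Fréchet derivative at `0` of the endpoint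
perturbation `h ↦ u(t, x_t^h)`), with `𝔡u = du` continuous and bounded, `u` continuous,
and all functionals nonanticipative, then along any solution `X` of `dX/dt = β(t,X_t)`
with `X = x_ρ` on `[0,ρ]`,
`u(τ, X_τ) − u(ρ, x_ρ) = ∫_ρ^τ [ 𝔡_s u(s,X_s) + β(s,X_s)·∇u(s,X_s) ] ds`. -/
theorem stmt_16 (T L : ℝ) (hT : 0 < T) (hL : 0 < L) (d : ℕ) (hd : 0 < d)
    (β : ℝ → (ℝ → EuclideanSpace ℝ (Fin d)) → EuclideanSpace ℝ (Fin d))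
    (u du : ℝ → (ℝ → EuclideanSpace ℝ (Fin d)) → ℝ)
    (Du : ℝ → (ℝ → EuclideanSpace ℝ (Fin d)) → EuclideanSpace ℝ (Fin d))
    -- β: measurable in time, nonanticipative, bounded, Lipschitz in the path (sup on [0,t])
    (hβmeas : ∀ x, Measurable fun t => β t x)
    (hβna : ∀ t ∈ Set.Icc (0:ℝ) T, ∀ x y,
      (∀ s, 0 ≤ s → s ≤ t → x s = y s) → β t x = β t y)
    (hβbd : ∀ t ∈ Set.Icc (0:ℝ) T, ∀ x, ‖β t x‖ ≤ L)
    (hβlip : ∀ t ∈ Set.Icc (0:ℝ) T, ∀ x y, ∀ C : ℝ, 0 ≤ C →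
      (∀ s, 0 ≤ s → s ≤ t → ‖x s - y s‖ ≤ C) → ‖β t x - β t y‖ ≤ L * C)
    -- nonanticipativity of u, du, Du
    (huna : ∀ t ∈ Set.Icc (0:ℝ) T, ∀ x y,
      (∀ s, 0 ≤ s → s ≤ t → x s = y s) → u t x = u t y)
    (hduna : ∀ t ∈ Set.Icc (0:ℝ) T, ∀ x y,
      (∀ s, 0 ≤ s → s ≤ t → x s = y s) → du t x = du t y)
    (hDuna : ∀ t ∈ Set.Icc (0:ℝ) T, ∀ x y,
      (∀ s, 0 ≤ s → s ≤ t → x s = y s) → Du t x = Du t y)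
    -- the horizontal-extension identity defining `𝔡_t u = du`
    (hhor : ∀ ρ τ : ℝ, 0 ≤ ρ → ρ ≤ τ → τ ≤ T → ∀ x : ℝ → EuclideanSpace ℝ (Fin d),
      u τ (frz x ρ) = u ρ (frz x ρ) + ∫ s' in ρ..τ, du s' (frz x ρ))
    -- the vertical derivative: `∇u(t,x) = Du t x`
    (hvert : ∀ t ∈ Set.Icc (0:ℝ) T, ∀ x : ℝ → EuclideanSpace ℝ (Fin d),
      HasFDerivAt (fun h : EuclideanSpace ℝ (Fin d) =>
          u t (Function.update x t (x t + h)))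
        (innerSL ℝ (Du t x)) 0)
    -- boundedness of du and Du
    (hdubd : ∃ C : ℝ, ∀ t ∈ Set.Icc (0:ℝ) T, ∀ x, |du t x| ≤ C)
    (hDubd : ∃ C : ℝ, ∀ t ∈ Set.Icc (0:ℝ) T, ∀ x, ‖Du t x‖ ≤ C)
    -- joint continuity of u, du, Du in time and in the path (uniform norm)
    (hucont : ∀ t ∈ Set.Icc (0:ℝ) T, ∀ x, ∀ ε > (0:ℝ), ∃ η > (0:ℝ),
      ∀ t' ∈ Set.Icc (0:ℝ) T, ∀ y, |t' - t| ≤ η → (∀ s, ‖y s - x s‖ ≤ η) →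
        |u t' y - u t x| ≤ ε)
    (hducont : ∀ t ∈ Set.Icc (0:ℝ) T, ∀ x, ∀ ε > (0:ℝ), ∃ η > (0:ℝ),
      ∀ t' ∈ Set.Icc (0:ℝ) T, ∀ y, |t' - t| ≤ η → (∀ s, ‖y s - x s‖ ≤ η) →
        |du t' y - du t x| ≤ ε)
    (hDucont : ∀ t ∈ Set.Icc (0:ℝ) T, ∀ x, ∀ ε > (0:ℝ), ∃ η > (0:ℝ),
      ∀ t' ∈ Set.Icc (0:ℝ) T, ∀ y, |t' - t| ≤ η → (∀ s, ‖y s - x s‖ ≤ η) →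
        ‖Du t' y - Du t x‖ ≤ ε)
    -- the solution X of the path-dependent ODE starting at time ρ
    (ρ : ℝ) (hρ : ρ ∈ Set.Icc (0:ℝ) T) (X : ℝ → EuclideanSpace ℝ (Fin d))
    (hXc : Continuous X)
    (hXsol : ∀ a b : ℝ, ρ ≤ a → a ≤ b → b ≤ T →
      X b = X a + ∫ s' in a..b, β s' X) :
    ∀ τ : ℝ, ρ ≤ τ → τ ≤ T →
      u τ (frz X τ) - u ρ (frz X ρ) =
        ∫ s' in ρ..τ,
          (du s' (frz X s') +
            inner (𝕜 := ℝ) (β s' (frz X s')) (Du s' (frz X s'))) := by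
  intro τ hρτ hτT
  rcases eq_or_lt_of_le hρτ with heq | hlt
  · subst heq; simp
  have h0ρ : (0:ℝ) ≤ ρ := hρ.1
  have h0τ : (0:ℝ) ≤ τ := h0ρ.trans hρτ
  have hsub : Set.Icc ρ τ ⊆ Set.Icc (0:ℝ) T := Set.Icc_subset_Icc h0ρ hτT
  obtain ⟨CDu, hCDu⟩ := hDubd
  have hCDu0 : 0 ≤ CDu := le_trans (norm_nonneg _) (hCDu ρ hρ X)
  -- integrability of β along X
  have hβint : ∀ a b : ℝ, 0 ≤ a → a ≤ b → b ≤ T →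
      IntervalIntegrable (fun s' => β s' X) volume a b := by
    intro a b h0a hab hbT
    rw [intervalIntegrable_iff, Set.uIoc_of_le hab]
    refine Integrable.mono' (g := fun _ => L)
      (integrableOn_const measure_Ioc_lt_top.ne)
      ((hβmeas X).aestronglyMeasurable.restrict) ?_
    refine (ae_restrict_iff' measurableSet_Ioc).2 (ae_of_all _ fun s hs => ?_)
    exact hβbd s ⟨h0a.trans hs.1.le, hs.2.trans hbT⟩ X
  -- X is Lipschitz on [ρ, T]
  have hXlip : ∀ a b, ρ ≤ a → a ≤ b → b ≤ T → ‖X b - X a‖ ≤ L * (b - a) := by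
    intro a b hρa hab hbT
    have := hXsol a b hρa hab hbT
    have h1 : X b - X a = ∫ s' in a..b, β s' X := by rw [this]; abel
    rw [h1]
    calc ‖∫ s' in a..b, β s' X‖ ≤ L * |b - a| := by
          apply intervalIntegral.norm_integral_le_of_norm_le_const
          intro x hx
          rw [Set.uIoc_of_le hab] at hx
          exact hβbd x ⟨(h0ρ.trans hρa).trans hx.1.le, hx.2.trans hbT⟩ X
      _ = L * (b - a) := by rw [abs_of_nonneg (sub_nonneg.2 hab)]
  have hfrzXlip := frz_dist hL.le X hXlip
  -- norm versions of the continuity hypotheses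
  have hducontN : ∀ t ∈ Set.Icc (0:ℝ) T, ∀ x, ∀ ε > (0:ℝ), ∃ η > (0:ℝ),
      ∀ t' ∈ Set.Icc (0:ℝ) T, ∀ y, |t' - t| ≤ η → (∀ s, ‖y s - x s‖ ≤ η) →
        ‖du t' y - du t x‖ ≤ ε := by
    simpa only [Real.norm_eq_abs] using hducont
  -- continuity of the frozen-path compositions
  have hduPathCont : ContinuousOn (fun s' => du s' (frz X s')) (Set.Icc ρ τ) := by
    refine aux_contOn du hducontN (frz X) _ hsub L hL.le ?_
    intro a ha b hb s
    exact hfrzXlip a (Set.Icc_subset_Icc_right hτT ha) b (Set.Icc_subset_Icc_right hτT hb) s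
  have hDuPathCont : ContinuousOn (fun s' => Du s' (frz X s')) (Set.Icc ρ τ) := by
    refine aux_contOn Du hDucont (frz X) _ hsub L hL.le ?_
    intro a ha b hb s
    exact hfrzXlip a (Set.Icc_subset_Icc_right hτT ha) b (Set.Icc_subset_Icc_right hτT hb) s
  -- integrability pieces for the RHS
  have hduint : ∀ a b, ρ ≤ a → a ≤ b → b ≤ τ →
      IntervalIntegrable (fun s' => du s' (frz X s')) volume a b := by
    intro a b hρa hab hbτ
    apply ContinuousOn.intervalIntegrable
    rw [Set.uIcc_of_le hab]
    exact hduPathCont.mono (Set.Icc_subset_Icc hρa hbτ)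
  set G : ℝ → ℝ := fun s' => inner (𝕜 := ℝ) (β s' X) (Du s' (frz X s')) with hGdef
  have hGint : ∀ a b, ρ ≤ a → a ≤ b → b ≤ τ → IntervalIntegrable G volume a b := by
    intro a b hρa hab hbτ
    rw [intervalIntegrable_iff, Set.uIoc_of_le hab]
    refine Integrable.mono' (g := fun _ => L * CDu)
      (integrableOn_const measure_Ioc_lt_top.ne)
      (AEStronglyMeasurable.inner (hβmeas X).aestronglyMeasurable.restrict
        ((hDuPathCont.mono ?_).aestronglyMeasurable measurableSet_Ioc)) ?_
    · exact (Set.Ioc_subset_Icc_self).trans (Set.Icc_subset_Icc hρa hbτ)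
    · refine (ae_restrict_iff' measurableSet_Ioc).2 (ae_of_all _ fun s hs => ?_)
      have hs0T : s ∈ Set.Icc (0:ℝ) T :=
        ⟨(h0ρ.trans hρa).trans hs.1.le, (hs.2.trans hbτ).trans hτT⟩
      calc ‖G s‖ ≤ ‖β s X‖ * ‖Du s (frz X s)‖ := norm_inner_le_norm _ _
        _ ≤ L * CDu := mul_le_mul (hβbd s hs0T X) (hCDu s hs0T _) (norm_nonneg _) hL.le
  -- rewrite the RHS using nonanticipativity of β
  have hRHS : (∫ s' in ρ..τ, (du s' (frz X s') +
        inner (𝕜 := ℝ) (β s' (frz X s')) (Du s' (frz X s')))) =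
      ∫ s' in ρ..τ, (du s' (frz X s') + G s') := by
    refine intervalIntegral.integral_congr fun s' hs' => ?_
    rw [Set.uIcc_of_le hρτ] at hs'
    have : β s' (frz X s') = β s' X := by
      refine hβna s' (hsub hs') _ _ fun s h0s hss' => ?_
      simp [frz, min_eq_left hss']
    rw [this]
  rw [hRHS]
  set K : ℝ := 1 + (1 + L) * (τ - ρ) with hKdef
  have hK : 0 < K := by nlinarith
  have key : ∀ ε > (0:ℝ),
      |u τ (frz X τ) - u ρ (frz X ρ) - ∫ s' in ρ..τ, (du s' (frz X s') + G s')| ≤ ε * K := by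
    intro ε hε
    obtain ⟨η₁, hη₁, Hdu⟩ :=
      aux_unif hL.le h0ρ hρτ hτT X hXlip du hducontN ε hε
    obtain ⟨η₂, hη₂, HDu⟩ :=
      aux_unif hL.le h0ρ hρτ hτT X hXlip Du hDucont ε hε
    obtain ⟨η₃, hη₃, Hu⟩ := hucont τ ⟨h0τ, hτT⟩ (frz X τ) ε hε
    set δ : ℝ := min η₁ (min η₂ η₃) / (2 * L + 1) with hδdef
    have hmin0 : 0 < min η₁ (min η₂ η₃) := lt_min hη₁ (lt_min hη₂ hη₃)
    have hδ : 0 < δ := div_pos hmin0 (by linarith)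
    obtain ⟨n, hn⟩ := exists_nat_gt ((τ - ρ) / δ)
    have hn0 : 0 < (n:ℝ) := lt_of_le_of_lt (div_nonneg (by linarith) hδ.le) hn
    have hn0' : (n:ℝ) ≠ 0 := hn0.ne'
    set h : ℝ := (τ - ρ) / n with hhdef
    have hh0 : 0 < h := div_pos (by linarith) hn0
    have hhδ : h ≤ δ := by
      rw [hhdef, div_le_iff₀ hn0]
      rw [div_lt_iff₀ hδ] at hn
      nlinarith
    have h2L : 2 * L * h ≤ min η₁ (min η₂ η₃) := by
      have : (2 * L + 1) * δ = min η₁ (min η₂ η₃) := by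
        rw [hδdef]; field_simp
      nlinarith
    have hhη₁ : 2 * L * h ≤ η₁ := le_trans h2L (min_le_left _ _)
    have hhη₂ : 2 * L * h ≤ η₂ := le_trans h2L ((min_le_right _ _).trans (min_le_left _ _))
    have hhη₃ : 2 * L * h ≤ η₃ := le_trans h2L ((min_le_right _ _).trans (min_le_right _ _))
    have hhm : h ≤ min η₁ (min η₂ η₃) := by
      have : δ ≤ min η₁ (min η₂ η₃) := by
        rw [hδdef]; exact div_le_self hmin0.le (by linarith)
      linarith
    -- the grid
    set t : ℕ → ℝ := fun i => ρ + i * h with htdef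
    have ht0 : t 0 = ρ := by simp [htdef]
    have htn : t n = τ := by
      simp only [htdef, hhdef]
      field_simp
      ring
    have htsucc : ∀ i : ℕ, t (i + 1) - t i = h := by
      intro i; rw [htdef]; push_cast; ring
    have htmono : ∀ i j : ℕ, i ≤ j → t i ≤ t j := by
      intro i j hij
      have hc : (i:ℝ) ≤ j := Nat.cast_le.2 hij
      simp only [htdef]
      nlinarith
    have htρ : ∀ i : ℕ, ρ ≤ t i := fun i => by rw [← ht0]; exact htmono 0 i (Nat.zero_le i)
    have htmem : ∀ i : ℕ, i ≤ n → t i ∈ Set.Icc ρ τ :=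
      fun i hi => ⟨htρ i, by rw [← htn]; exact htmono i n hi⟩
    -- the discretization
    set ν : ℝ → ℝ := fun s => if s ≤ ρ then s else ρ + (⌊(s - ρ) / h⌋₊ : ℝ) * h with hνdef
    set q : ℝ → EuclideanSpace ℝ (Fin d) := fun s => X (ν s) with hqdef
    have hν1 : ∀ s, ν s ≤ s := by
      intro s
      simp only [hνdef]
      by_cases hs : s ≤ ρ
      · simp [hs]
      · simp only [hs, if_false]
        push_neg at hs
        have h1 : (⌊(s - ρ) / h⌋₊ : ℝ) ≤ (s - ρ) / h :=
          Nat.floor_le (div_nonneg (by linarith) hh0.le)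
        rw [le_div_iff₀ hh0] at h1
        linarith
    have hνρ : ∀ s, ρ ≤ s → ρ ≤ ν s := by
      intro s hs
      simp only [hνdef]
      by_cases hsρ : s ≤ ρ
      · rw [if_pos hsρ]; linarith
      · rw [if_neg hsρ]
        nlinarith [Nat.cast_nonneg (α := ℝ) ⌊(s - ρ) / h⌋₊]
    have hνdefect : ∀ s, s - ν s ≤ h := by
      intro s
      simp only [hνdef]
      by_cases hsρ : s ≤ ρ
      · rw [if_pos hsρ]; linarith
      · rw [if_neg hsρ]
        push_neg at hsρ
        have h1 : (s - ρ)/h < (⌊(s - ρ) / h⌋₊ : ℝ) + 1 := Nat.lt_floor_add_one _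
        rw [div_lt_iff₀ hh0] at h1
        nlinarith
    have hνgrid : ∀ i : ℕ, ν (t i) = t i := by
      intro i
      rcases Nat.eq_zero_or_pos i with h0 | hpos
      · subst h0; rw [ht0]; simp only [hνdef]; simp
      · simp only [hνdef]
        have hti : ¬ t i ≤ ρ := by
          simp only [htdef]
          push_neg
          have hi0 : (0:ℝ) < i := by exact_mod_cast hpos
          nlinarith
        rw [if_neg hti]
        have he : (t i - ρ)/h = (i:ℝ) := by
          simp only [htdef]; field_simp; ring
        rw [he, Nat.floor_natCast]
    have hνmid : ∀ (i : ℕ) s, t i < s → s < t (i + 1) → ν s = t i := by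
      intro i s h1 h2
      have hρs : ρ < s := lt_of_le_of_lt (htρ i) h1
      simp only [hνdef]
      rw [if_neg (not_le.2 hρs)]
      have hfl : ⌊(s - ρ) / h⌋₊ = i := by
        rw [Nat.floor_eq_iff (div_nonneg (by linarith) hh0.le)]
        constructor
        · rw [le_div_iff₀ hh0]
          simp only [htdef] at h1
          linarith
        · rw [div_lt_iff₀ hh0]
          simp only [htdef] at h2
          push_cast at h2 ⊢
          linarith
      rw [hfl]
    have hXν : ∀ m, m ≤ τ → ‖X (ν m) - X m‖ ≤ L * h := by
      intro m hm
      by_cases hmρ : m ≤ ρ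
      · have he : ν m = m := by simp only [hνdef]; simp [hmρ]
        rw [he]
        simp
        positivity
      · push_neg at hmρ
        have h1 := hνρ m hmρ.le
        have h2 := hν1 m
        have h3 := hνdefect m
        have h4 := hXlip (ν m) m h1 h2 (hm.trans hτT)
        rw [norm_sub_rev]
        calc ‖X m - X (ν m)‖ ≤ L * (m - ν m) := h4
          _ ≤ L * h := by nlinarith
    have hq_grid : ∀ i : ℕ, q (t i) = X (t i) := by
      intro i
      simp only [hqdef]
      rw [hνgrid]
    have hfrzqρ : frz q ρ = frz X ρ := by
      funext s
      have he : ν (min s ρ) = min s ρ := by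
        simp only [hνdef]; simp [min_le_right s ρ]
      simp only [frz, hqdef, he]
    have hstep : ∀ i : ℕ, i < n → ∀ s' ∈ Set.Icc (t i) (t (i+1)), ∀ s,
        ‖frz q (t i) s - frz X s' s‖ ≤ 2 * L * h := by
      intro i hi s' hs' s
      have hti_mem := htmem i hi.le
      have hti1_mem := htmem (i+1) hi
      have hs'τ : s' ≤ τ := hs'.2.trans hti1_mem.2
      rcases le_or_gt s (t i) with hsle | hsgt
      · have h1 : min s (t i) = s := min_eq_left hsle
        have h2 : min s s' = s := min_eq_left (hsle.trans hs'.1)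
        show ‖q (min s (t i)) - X (min s s')‖ ≤ 2 * L * h
        rw [h1, h2]
        have h3 := hXν s (hsle.trans hti_mem.2)
        calc ‖q s - X s‖ = ‖X (ν s) - X s‖ := by simp only [hqdef]
          _ ≤ L * h := h3
          _ ≤ 2 * L * h := by nlinarith
      · have h1 : min s (t i) = t i := min_eq_right hsgt.le
        show ‖q (min s (t i)) - X (min s s')‖ ≤ 2 * L * h
        rw [h1, hq_grid i]
        have hmin1 : t i ≤ min s s' := le_min hsgt.le hs'.1
        have hmin2 : min s s' ≤ s' := min_le_right _ _
        have h4 := hXlip (t i) (min s s') (htρ i) hmin1 ((hmin2.trans hs'τ).trans hτT)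
        rw [norm_sub_rev]
        calc ‖X (min s s') - X (t i)‖ ≤ L * (min s s' - t i) := h4
          _ ≤ 2 * L * h := by
              have h5 : s' - t i ≤ h := by have := htsucc i; have := hs'.2; linarith
              nlinarith
    -- the per-step identity and estimate
    have hstepmain : ∀ i : ℕ, i < n →
        |(u (t (i+1)) (frz q (t (i+1))) - u (t i) (frz q (t i))) -
          ∫ s' in t i..t (i+1), (du s' (frz X s') + G s')| ≤ ε * h + ε * (L * h) := by
      intro i hi
      have hab : t i ≤ t (i+1) := htmono i (i+1) (Nat.le_succ i)
      have hba : t (i+1) - t i = h := htsucc i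
      have haρ : ρ ≤ t i := htρ i
      have h0a : (0:ℝ) ≤ t i := h0ρ.trans haρ
      have h0b : (0:ℝ) ≤ t (i+1) := h0ρ.trans (htρ (i+1))
      have hbτ : t (i+1) ≤ τ := (htmem (i+1) hi).2
      have haτ : t i ≤ τ := hab.trans hbτ
      have hbT : t (i+1) ≤ T := hbτ.trans hτT
      have haT : t i ≤ T := haτ.trans hτT
      -- horizontal step
      have Hhor := hhor (t i) (t (i+1)) h0a hab hbT q
      -- vertical agreement
      have hagree : u (t (i+1)) (frz q (t (i+1))) =
          u (t (i+1)) (Function.update (frz q (t i)) (t (i+1)) (X (t (i+1)))) := by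
        refine huna (t (i+1)) ⟨h0b, hbT⟩ _ _ fun s h0s hsb => ?_
        by_cases hsbeq : s = t (i+1)
        · rw [hsbeq, Function.update_self]
          show q (min (t (i+1)) (t (i+1))) = X (t (i+1))
          rw [min_self]
          exact hq_grid (i+1)
        · have hsb' : s < t (i+1) := lt_of_le_of_ne hsb hsbeq
          rw [Function.update_of_ne hsbeq]
          show q (min s (t (i+1))) = q (min s (t i))
          rw [min_eq_left hsb]
          rcases le_or_gt s (t i) with hle | hgt
          · rw [min_eq_left hle]
          · rw [min_eq_right hgt.le]
            simp only [hqdef]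
            rw [hνmid i s hgt hsb', hνgrid i]
      have hwb : frz q (t i) (t (i+1)) = X (t i) := by
        show q (min (t (i+1)) (t i)) = X (t i)
        rw [min_eq_right hab]
        exact hq_grid i
      set Δ : EuclideanSpace ℝ (Fin d) := X (t (i+1)) - X (t i) with hΔdef
      set P : ℝ → (ℝ → EuclideanSpace ℝ (Fin d)) :=
        fun θ => Function.update (frz q (t i)) (t (i+1)) (X (t i) + θ • Δ) with hPdef
      set g : EuclideanSpace ℝ (Fin d) → ℝ :=
        fun v => u (t (i+1)) (Function.update (frz q (t i)) (t (i+1)) (X (t i) + v)) with hgdef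
      have hgderiv : ∀ v, HasFDerivAt g
          (innerSL ℝ (Du (t (i+1)) (Function.update (frz q (t i)) (t (i+1)) (X (t i) + v)))) v := by
        intro v
        set z := Function.update (frz q (t i)) (t (i+1)) (X (t i) + v) with hzdef
        have h1 := hvert (t (i+1)) ⟨h0b, hbT⟩ z
        have heq : (fun h' => u (t (i+1)) (Function.update z (t (i+1)) (z (t (i+1)) + h'))) =
            fun h' => g (v + h') := by
          funext h'
          simp only [hzdef, hgdef, Function.update_idem, Function.update_self]
          rw [add_assoc]
        rw [heq] at h1
        have h2 : HasFDerivAt (fun w' : EuclideanSpace ℝ (Fin d) => w' - v)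
            (ContinuousLinearMap.id ℝ (EuclideanSpace ℝ (Fin d))) v :=
          (hasFDerivAt_id v).sub_const v
        have h1' : HasFDerivAt (fun h' => g (v + h'))
            (innerSL ℝ (Du (t (i+1)) z)) (v - v) := by
          rw [sub_self]; exact h1
        have h3 := HasFDerivAt.comp (f := fun w' : EuclideanSpace ℝ (Fin d) => w' - v) v h1' h2
        have h4 : g = (fun h' => g (v + h')) ∘ (fun w' : EuclideanSpace ℝ (Fin d) => w' - v) := by
          funext w'
          simp [Function.comp, add_sub_cancel]
        rw [hzdef] at h3
        rw [h4]
        simpa using h3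
      have hφ : ∀ θ : ℝ, HasDerivAt (fun θ' : ℝ => g (θ' • Δ))
          (inner (𝕜 := ℝ) (Du (t (i+1)) (P θ)) Δ) θ := by
        intro θ
        have hsm : HasDerivAt (fun θ' : ℝ => θ' • Δ) Δ θ := by
          simpa using (hasDerivAt_id θ).smul_const Δ
        have := (hgderiv (θ • Δ)).comp_hasDerivAt θ hsm
        exact this
      have hγlip : ∀ θ θ' s, ‖P θ s - P θ' s‖ ≤ ‖Δ‖ * |θ - θ'| := by
        intro θ θ' s
        by_cases hsb : s = t (i+1)
        · subst hsb
          simp only [hPdef, Function.update_self]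
          have e : (X (t i) + θ • Δ) - (X (t i) + θ' • Δ) = (θ - θ') • Δ := by
            rw [sub_smul]; abel
          rw [e, norm_smul, Real.norm_eq_abs, mul_comm]
        · simp only [hPdef, Function.update_of_ne hsb]
          simp
          positivity
      have hPcont : Continuous fun θ : ℝ => Du (t (i+1)) (P θ) :=
        aux_cont_fixed Du hDucont (t (i+1)) ⟨h0b, hbT⟩ P ‖Δ‖ (norm_nonneg _) hγlip
      have hVintb : IntervalIntegrable
          (fun θ : ℝ => inner (𝕜 := ℝ) (Du (t (i+1)) (P θ)) Δ) volume 0 1 :=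
        (hPcont.inner continuous_const).intervalIntegrable _ _
      have hV : u (t (i+1)) (Function.update (frz q (t i)) (t (i+1)) (X (t (i+1)))) -
          u (t (i+1)) (frz q (t i)) =
          ∫ θ in (0:ℝ)..1, inner (𝕜 := ℝ) (Du (t (i+1)) (P θ)) Δ := by
        rw [intervalIntegral.integral_eq_sub_of_hasDerivAt (fun θ _ => hφ θ) hVintb]
        have e1 : X (t i) + Δ = X (t (i+1)) := by rw [hΔdef]; abel
        have e2 : Function.update (frz q (t i)) (t (i+1))
            (X (t i) + (0:EuclideanSpace ℝ (Fin d))) = frz q (t i) := by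
          rw [add_zero, ← hwb, Function.update_eq_self]
        simp only [one_smul, zero_smul, hgdef]
        rw [e1, e2]
      -- step identity
      have hid : u (t (i+1)) (frz q (t (i+1))) - u (t i) (frz q (t i)) =
          (∫ s' in t i..t (i+1), du s' (frz q (t i))) +
            ∫ θ in (0:ℝ)..1, inner (𝕜 := ℝ) (Du (t (i+1)) (P θ)) Δ := by
        rw [hagree]
        linarith [hV, Hhor]
      -- estimate E1
      have hint1 : IntervalIntegrable (fun s' => du s' (frz q (t i))) volume (t i) (t (i+1)) := by
        apply ContinuousOn.intervalIntegrable
        rw [Set.uIcc_of_le hab]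
        refine aux_contOn du hducontN (fun _ => frz q (t i)) _
          (Set.Icc_subset_Icc h0a hbT) 0 le_rfl ?_
        intro a' _ b' _ s
        simp
      have hE1 : |(∫ s' in t i..t (i+1), du s' (frz q (t i))) -
          ∫ s' in t i..t (i+1), du s' (frz X s')| ≤ ε * h := by
        rw [← intervalIntegral.integral_sub hint1 (hduint (t i) (t (i+1)) haρ hab hbτ),
          ← Real.norm_eq_abs]
        calc ‖∫ s' in t i..t (i+1), (du s' (frz q (t i)) - du s' (frz X s'))‖
            ≤ ε * |t (i+1) - t i| := by
              apply intervalIntegral.norm_integral_le_of_norm_le_const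
              intro s' hs'
              rw [Set.uIoc_of_le hab] at hs'
              have hs'I : s' ∈ Set.Icc (t i) (t (i+1)) := Set.Ioc_subset_Icc_self hs'
              refine Hdu s' ⟨haρ.trans hs'I.1, hs'I.2.trans hbτ⟩ s'
                ⟨h0a.trans hs'I.1, (hs'I.2.trans hbτ).trans hτT⟩ (frz q (t i)) (by simp [hη₁.le]) ?_
              intro s
              exact (hstep i hi s' hs'I s).trans hhη₁
          _ = ε * h := by rw [hba, abs_of_nonneg hh0.le]
      -- estimate E2
      have hΔint : Δ = ∫ s' in t i..t (i+1), β s' X := by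
        rw [hΔdef, hXsol (t i) (t (i+1)) haρ hab hbT]
        abel
      have hΔnorm : ‖Δ‖ ≤ L * h := by
        rw [hΔdef]
        have := hXlip (t i) (t (i+1)) haρ hab hbT
        rwa [hba] at this
      have hstep2 : ∀ θ ∈ Set.Icc (0:ℝ) 1, ∀ s' ∈ Set.Icc (t i) (t (i+1)), ∀ s,
          ‖P θ s - frz X s' s‖ ≤ 2 * L * h := by
        intro θ hθ s' hs' s
        by_cases hsb : s = t (i+1)
        · subst hsb
          simp only [hPdef, Function.update_self]
          show ‖X (t i) + θ • Δ - X (min (t (i+1)) s')‖ ≤ 2 * L * h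
          rw [min_eq_right hs'.2]
          have e : X (t i) + θ • Δ - X s' = (X (t i) - X s') + θ • Δ := by abel
          rw [e]
          refine (norm_add_le _ _).trans ?_
          have n1 : ‖X (t i) - X s'‖ ≤ L * h := by
            rw [norm_sub_rev]
            refine (hXlip (t i) s' haρ hs'.1 (hs'.2.trans hbT)).trans ?_
            have : s' - t i ≤ h := by linarith [hs'.2, hba]
            nlinarith
          have n2 : ‖θ • Δ‖ ≤ L * h := by
            rw [norm_smul, Real.norm_eq_abs, abs_of_nonneg hθ.1]
            nlinarith [norm_nonneg Δ, hθ.2]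
          linarith
        · simp only [hPdef, Function.update_of_ne hsb]
          exact hstep i hi s' hs' s
      have hcDu : ∀ θ ∈ Set.Icc (0:ℝ) 1, ∀ s' ∈ Set.Icc (t i) (t (i+1)),
          ‖Du (t (i+1)) (P θ) - Du s' (frz X s')‖ ≤ ε := by
        intro θ hθ s' hs'
        refine HDu s' ⟨haρ.trans hs'.1, hs'.2.trans hbτ⟩ (t (i+1)) ⟨h0b, hbT⟩ _ ?_ ?_
        · rw [abs_of_nonneg (sub_nonneg.2 hs'.2)]
          have : h ≤ η₂ := le_trans hhm ((min_le_right _ _).trans (min_le_left _ _))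
          linarith [hs'.1, hba]
        · intro s
          exact (hstep2 θ hθ s' hs' s).trans hhη₂
      have hinn_int : ∀ c : EuclideanSpace ℝ (Fin d), IntervalIntegrable
          (fun s' => (inner (𝕜 := ℝ) c (β s' X) : ℝ)) volume (t i) (t (i+1)) := by
        intro c
        rw [intervalIntegrable_iff, Set.uIoc_of_le hab]
        refine Integrable.mono' (g := fun _ => ‖c‖ * L)
          (integrableOn_const measure_Ioc_lt_top.ne)
          ((AEStronglyMeasurable.inner aestronglyMeasurable_const
            (hβmeas X).aestronglyMeasurable).restrict) ?_
        refine (ae_restrict_iff' measurableSet_Ioc).2 (ae_of_all _ fun s hs => ?_)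
        calc ‖(inner (𝕜 := ℝ) c (β s X) : ℝ)‖ ≤ ‖c‖ * ‖β s X‖ := norm_inner_le_norm _ _
          _ ≤ ‖c‖ * L := mul_le_mul_of_nonneg_left
              (hβbd s ⟨h0a.trans hs.1.le, hs.2.trans hbT⟩ X) (norm_nonneg _)
      have hc_eq : ∀ c : EuclideanSpace ℝ (Fin d), (inner (𝕜 := ℝ) c Δ : ℝ) =
          ∫ s' in t i..t (i+1), (inner (𝕜 := ℝ) c (β s' X) : ℝ) := by
        intro c
        rw [hΔint]
        have := ContinuousLinearMap.intervalIntegral_comp_comm (innerSL ℝ c)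
          (hβint (t i) (t (i+1)) h0a hab hbT)
        simpa using this.symm
      have hE2 : |(∫ θ in (0:ℝ)..1, inner (𝕜 := ℝ) (Du (t (i+1)) (P θ)) Δ) -
          ∫ s' in t i..t (i+1), G s'| ≤ ε * (L * h) := by
        have hpoint : ∀ θ ∈ Set.uIoc (0:ℝ) 1,
            ‖inner (𝕜 := ℝ) (Du (t (i+1)) (P θ)) Δ - ∫ s' in t i..t (i+1), G s'‖ ≤ ε * (L * h) := by
          intro θ hθ
          rw [Set.uIoc_of_le (by norm_num : (0:ℝ) ≤ 1)] at hθ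
          have hθ' : θ ∈ Set.Icc (0:ℝ) 1 := Set.Ioc_subset_Icc_self hθ
          rw [hc_eq (Du (t (i+1)) (P θ)),
            ← intervalIntegral.integral_sub (hinn_int _) (hGint (t i) (t (i+1)) haρ hab hbτ)]
          calc ‖∫ s' in t i..t (i+1),
                ((inner (𝕜 := ℝ) (Du (t (i+1)) (P θ)) (β s' X) : ℝ) - G s')‖
              ≤ (ε * L) * |t (i+1) - t i| := by
                apply intervalIntegral.norm_integral_le_of_norm_le_const
                intro s' hs'
                rw [Set.uIoc_of_le hab] at hs'
                have hs'I : s' ∈ Set.Icc (t i) (t (i+1)) := Set.Ioc_subset_Icc_self hs'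
                have e : (inner (𝕜 := ℝ) (Du (t (i+1)) (P θ)) (β s' X) : ℝ) - G s' =
                    inner (𝕜 := ℝ) (Du (t (i+1)) (P θ) - Du s' (frz X s')) (β s' X) := by
                  simp only [hGdef]
                  rw [inner_sub_left, real_inner_comm (β s' X) (Du s' (frz X s'))]
                rw [e]
                calc ‖(inner (𝕜 := ℝ) (Du (t (i+1)) (P θ) - Du s' (frz X s')) (β s' X) : ℝ)‖
                    ≤ ‖Du (t (i+1)) (P θ) - Du s' (frz X s')‖ * ‖β s' X‖ := norm_inner_le_norm _ _
                  _ ≤ ε * L := mul_le_mul (hcDu θ hθ' s' hs'I)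
                      (hβbd s' ⟨h0a.trans hs'I.1, hs'I.2.trans hbT⟩ X) (norm_nonneg _) hε.le
              _ = ε * (L * h) := by rw [hba, abs_of_nonneg hh0.le]; ring
        have hconst : (∫ s' in t i..t (i+1), G s') =
            ∫ θ in (0:ℝ)..1, (∫ s' in t i..t (i+1), G s') := by simp
        rw [hconst, ← intervalIntegral.integral_sub hVintb intervalIntegrable_const,
          ← Real.norm_eq_abs]
        calc ‖∫ θ in (0:ℝ)..1, (inner (𝕜 := ℝ) (Du (t (i+1)) (P θ)) Δ -
              ∫ s' in t i..t (i+1), G s')‖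
            ≤ (ε * (L * h)) * |1 - 0| :=
              intervalIntegral.norm_integral_le_of_norm_le_const hpoint
          _ = ε * (L * h) := by norm_num
      -- combine
      have hIi : (∫ s' in t i..t (i+1), (du s' (frz X s') + G s')) =
          (∫ s' in t i..t (i+1), du s' (frz X s')) + ∫ s' in t i..t (i+1), G s' :=
        intervalIntegral.integral_add (hduint _ _ haρ hab hbτ) (hGint _ _ haρ hab hbτ)
      rw [hid, hIi]
      have e : ((∫ s' in t i..t (i+1), du s' (frz q (t i))) +
            ∫ θ in (0:ℝ)..1, inner (𝕜 := ℝ) (Du (t (i+1)) (P θ)) Δ) -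
          ((∫ s' in t i..t (i+1), du s' (frz X s')) + ∫ s' in t i..t (i+1), G s') =
          ((∫ s' in t i..t (i+1), du s' (frz q (t i))) -
            ∫ s' in t i..t (i+1), du s' (frz X s')) +
          ((∫ θ in (0:ℝ)..1, inner (𝕜 := ℝ) (Du (t (i+1)) (P θ)) Δ) -
            ∫ s' in t i..t (i+1), G s') := by ring
      rw [e]
      exact (abs_add_le _ _).trans (add_le_add hE1 hE2)
    -- telescoping and conclusion
    have htele : u τ (frz q τ) - u ρ (frz q ρ) =
        ∑ i ∈ Finset.range n, (u (t (i+1)) (frz q (t (i+1))) - u (t i) (frz q (t i))) := by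
      rw [Finset.sum_range_sub (fun i => u (t i) (frz q (t i))) n, ht0, htn]
    have hintsub : ∀ k < n, IntervalIntegrable (fun s' => du s' (frz X s') + G s') volume (t k) (t (k+1)) := by
      intro k hk
      exact (hduint _ _ (htρ k) (htmono k (k+1) (Nat.le_succ k)) (htmem (k+1) hk).2).add
        (hGint _ _ (htρ k) (htmono k (k+1) (Nat.le_succ k)) (htmem (k+1) hk).2)
    have hsplit : (∫ s' in ρ..τ, (du s' (frz X s') + G s')) =
        ∑ i ∈ Finset.range n, ∫ s' in t i..t (i+1), (du s' (frz X s') + G s') := by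
      rw [intervalIntegral.sum_integral_adjacent_intervals hintsub, ht0, htn]
    have hEτ : |u τ (frz X τ) - u τ (frz q τ)| ≤ ε := by
      rw [abs_sub_comm]
      refine Hu τ ⟨h0τ, hτT⟩ (frz q τ) (by simp [hη₃.le]) ?_
      intro s
      have hb : ‖frz q τ s - frz X τ s‖ ≤ L * h := by
        show ‖q (min s τ) - X (min s τ)‖ ≤ L * h
        simp only [hqdef]
        exact hXν (min s τ) (min_le_right s τ)
      refine hb.trans ?_
      nlinarith [hhη₃, hh0.le, hL.le]
    have hsumbound : |∑ i ∈ Finset.range n,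
        ((u (t (i+1)) (frz q (t (i+1))) - u (t i) (frz q (t i))) -
          ∫ s' in t i..t (i+1), (du s' (frz X s') + G s'))| ≤ (ε * h + ε * (L * h)) * n := by
      calc |∑ i ∈ Finset.range n,
          ((u (t (i+1)) (frz q (t (i+1))) - u (t i) (frz q (t i))) -
            ∫ s' in t i..t (i+1), (du s' (frz X s') + G s'))|
          ≤ ∑ i ∈ Finset.range n,
            |(u (t (i+1)) (frz q (t (i+1))) - u (t i) (frz q (t i))) -
              ∫ s' in t i..t (i+1), (du s' (frz X s') + G s')| := Finset.abs_sum_le_sum_abs _ _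
        _ ≤ ∑ _i ∈ Finset.range n, (ε * h + ε * (L * h)) :=
            Finset.sum_le_sum (fun i hi => hstepmain i (Finset.mem_range.1 hi))
        _ = (ε * h + ε * (L * h)) * n := by
            rw [Finset.sum_const, Finset.card_range, nsmul_eq_mul]; ring
    have hdecomp : u τ (frz X τ) - u ρ (frz X ρ) - ∫ s' in ρ..τ, (du s' (frz X s') + G s') =
        (u τ (frz X τ) - u τ (frz q τ)) +
        ∑ i ∈ Finset.range n,
          ((u (t (i+1)) (frz q (t (i+1))) - u (t i) (frz q (t i))) -
            ∫ s' in t i..t (i+1), (du s' (frz X s') + G s')) := by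
      rw [Finset.sum_sub_distrib, ← htele, ← hsplit, hfrzqρ]
      ring
    rw [hdecomp]
    have hnh : (n:ℝ) * h = τ - ρ := by rw [hhdef]; field_simp
    have hfin : (ε * h + ε * (L * h)) * n = ε * ((1 + L) * (τ - ρ)) := by
      rw [← hnh]; ring
    calc |(u τ (frz X τ) - u τ (frz q τ)) +
        ∑ i ∈ Finset.range n,
          ((u (t (i+1)) (frz q (t (i+1))) - u (t i) (frz q (t i))) -
            ∫ s' in t i..t (i+1), (du s' (frz X s') + G s'))|
        ≤ |u τ (frz X τ) - u τ (frz q τ)| +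
          |∑ i ∈ Finset.range n,
            ((u (t (i+1)) (frz q (t (i+1))) - u (t i) (frz q (t i))) -
              ∫ s' in t i..t (i+1), (du s' (frz X s') + G s'))| := abs_add_le _ _
      _ ≤ ε + (ε * h + ε * (L * h)) * n := add_le_add hEτ hsumbound
      _ = ε * K := by rw [hfin, hKdef]; ring
  have habs : ∀ ε' > (0:ℝ),
      |u τ (frz X τ) - u ρ (frz X ρ) - ∫ s' in ρ..τ, (du s' (frz X s') + G s')| ≤ ε' := by
    intro ε' hε'
    have := key (ε' / K) (by positivity)
    calc |u τ (frz X τ) - u ρ (frz X ρ) - ∫ s' in ρ..τ, (du s' (frz X s') + G s')|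
        ≤ ε' / K * K := this
      _ = ε' := div_mul_cancel₀ ε' hK.ne'
  have h0 : |u τ (frz X τ) - u ρ (frz X ρ) - ∫ s' in ρ..τ, (du s' (frz X s') + G s')| ≤ 0 := by
    refine le_of_forall_pos_le_add fun ε hε => ?_
    simpa using habs ε hε
  have := abs_nonpos_iff.1 h0
  linarith [abs_nonneg (u τ (frz X τ) - u ρ (frz X ρ) - ∫ s' in ρ..τ, (du s' (frz X s') + G s'))]
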